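/- Let G be a finite abelian group, M a Z[G]-module, P a finitely generated projective Z[G]-module and j : M → P an injective Z[G]-homomorphism whose cokernel is Z-torsion-free. Then the homomorphism Hom_{Z[G]}(P, Z[G]) → Hom_{Z[G]}(M, Z[G]) given by precomposition with j is surjective. -/

import Mathlib

open MonoidAlgebra

section PhiSection

variable {G : Type*} [CommGroup G] [Fintype G]
variable {N : Type*} [AddCommGroup N] [Module (MonoidAlgebra ℤ G) N]

/-- The raw map underlying `PhiAux`. -/
noncomputable def PhiRaw (f : N →+ ℤ) (x : N) : MonoidAlgebra ℤ G :=
  ∑ g : G, MonoidAlgebra.single g (f ((MonoidAlgebra.single (g⁻¹ : G) (1:ℤ)) • x))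

theorem PhiRaw_add (f : N →+ ℤ) (x y : N) :
    PhiRaw (G := G) f (x + y) = PhiRaw f x + PhiRaw f y := by
  unfold PhiRaw
  simp [smul_add, map_add, Finsupp.single_add, Finset.sum_add_distrib]

theorem PhiRaw_zsmul (f : N →+ ℤ) (c : ℤ) (x : N) :
    PhiRaw (G := G) f (c • x) = c • PhiRaw f x := by
  unfold PhiRaw
  have : ∀ g : G, (MonoidAlgebra.single (g⁻¹ : G) (1:ℤ)) • (c • x)
      = c • ((MonoidAlgebra.single (g⁻¹ : G) (1:ℤ)) • x) := fun g => smul_comm _ _ _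
  simp only [this, map_zsmul, Finset.smul_sum]
  refine Finset.sum_congr rfl fun g _ => ?_
  rw [MonoidAlgebra.smul_single, smul_eq_mul]

theorem PhiRaw_single_smul (f : N →+ ℤ) (h : G) (x : N) :
    PhiRaw (G := G) f ((MonoidAlgebra.single h (1:ℤ)) • x)
      = MonoidAlgebra.single h (1:ℤ) * PhiRaw f x := by
  unfold PhiRaw
  have key : ∀ g : G, (MonoidAlgebra.single (g⁻¹ : G) (1:ℤ)) •
      ((MonoidAlgebra.single h (1:ℤ)) • x)
      = (MonoidAlgebra.single ((g⁻¹ * h : G)) (1:ℤ)) • x := by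
    intro g
    rw [← mul_smul, MonoidAlgebra.single_mul_single, one_mul]
  simp only [key]
  rw [Finset.mul_sum]
  rw [← Equiv.sum_comp (Equiv.mulLeft h) (fun g : G =>
    MonoidAlgebra.single g (f ((MonoidAlgebra.single (g⁻¹ * h : G) (1:ℤ)) • x)))]
  apply Finset.sum_congr rfl
  intro g _
  rw [MonoidAlgebra.single_mul_single, one_mul]
  congr 2
  simp [Equiv.mulLeft, mul_comm, mul_assoc]

/-- Transfer a `ℤ`-linear functional to a `ℤ[G]`-linear map into the group ring. -/
noncomputable def PhiAux (f : N →+ ℤ) :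
    N →ₗ[MonoidAlgebra ℤ G] MonoidAlgebra ℤ G where
  toFun := PhiRaw f
  map_add' := PhiRaw_add f
  map_smul' a x := by
    simp only [RingHom.id_apply, smul_eq_mul]
    induction a using MonoidAlgebra.induction_on with
    | of h => exact PhiRaw_single_smul f h x
    | add a b ha hb =>
      rw [add_smul, PhiRaw_add, ha, hb, add_mul]
    | smul c a ha =>
      rw [smul_assoc, PhiRaw_zsmul, ha, smul_mul_assoc]

theorem PhiAux_eval_comp (g₀ : N →ₗ[MonoidAlgebra ℤ G] MonoidAlgebra ℤ G) :
    PhiAux (((Finsupp.applyAddHom (1 : G)).comp MonoidAlgebra.coeffAddEquiv.toAddMonoidHom).comp g₀.toAddMonoidHom) = g₀ := by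
  refine LinearMap.ext fun x => ?_
  show (∑ g : G, MonoidAlgebra.single g
      ((g₀ ((MonoidAlgebra.single (g⁻¹ : G) (1:ℤ)) • x)).coeff 1)) = g₀ x
  have h1 : ∀ g : G, g₀ ((MonoidAlgebra.single (g⁻¹ : G) (1:ℤ)) • x)
      = MonoidAlgebra.single (g⁻¹ : G) (1:ℤ) * g₀ x := fun g => by
    rw [map_smul]; rfl
  simp only [h1, MonoidAlgebra.single_mul_apply, one_mul, inv_inv, mul_one]
  classical
  ext a
  rw [MonoidAlgebra.coeff_sum, Finsupp.finset_sum_apply]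
  simp only [MonoidAlgebra.coeff_single, Finsupp.single_apply]
  rw [Finset.sum_ite_eq' Finset.univ a (fun g => (g₀ x).coeff g)]
  simp

end PhiSection

theorem dual_restriction_surjective_of_torsionFree_cokernel
    {G : Type*} [CommGroup G] [Fintype G]
    {M P : Type*} [AddCommGroup M] [AddCommGroup P]
    [Module (MonoidAlgebra ℤ G) M] [Module (MonoidAlgebra ℤ G) P]
    [Module.Finite (MonoidAlgebra ℤ G) P] [Module.Projective (MonoidAlgebra ℤ G) P]
    (j : M →ₗ[MonoidAlgebra ℤ G] P) (hj : Function.Injective j)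
    (htf : ∀ (p : P) (n : ℤ), n ≠ 0 → n • p ∈ LinearMap.range j → p ∈ LinearMap.range j) :
    Function.Surjective
      (fun g : P →ₗ[MonoidAlgebra ℤ G] MonoidAlgebra ℤ G => g.comp j) := by
  intro g₀
  -- ℤ-module setup
  let jz : M →ₗ[ℤ] P := j.restrictScalars ℤ
  let K : Submodule ℤ P := LinearMap.range jz
  have hK : ∀ p : P, p ∈ K ↔ p ∈ LinearMap.range j := by
    intro p; constructor
    · rintro ⟨m, rfl⟩; exact ⟨m, rfl⟩
    · rintro ⟨m, rfl⟩; exact ⟨m, rfl⟩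
  haveI : Module.Finite ℤ (MonoidAlgebra ℤ G) := inferInstance
  haveI : Module.Finite ℤ P := Module.Finite.trans (MonoidAlgebra ℤ G) P
  -- the cokernel is torsion-free, hence free, hence projective
  haveI : NoZeroSMulDivisors ℤ (P ⧸ K) := by
    constructor
    intro n x hnx
    rcases eq_or_ne n 0 with h | h
    · left; exact h
    · right
      obtain ⟨p, rfl⟩ := Submodule.mkQ_surjective K x
      rw [← map_smul, Submodule.mkQ_apply, Submodule.Quotient.mk_eq_zero] at hnx
      rw [Submodule.mkQ_apply, Submodule.Quotient.mk_eq_zero, hK]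
      exact htf p n h ((hK _).mp hnx)
  haveI : Module.Free ℤ (P ⧸ K) := Module.free_of_finite_type_torsion_free'
  -- split the quotient map ℤ-linearly
  obtain ⟨s, hs⟩ := Module.projective_lifting_property K.mkQ (LinearMap.id)
    (Submodule.mkQ_surjective K)
  -- retraction r : P → K
  have hrmem : ∀ p : P, p - s (K.mkQ p) ∈ K := by
    intro p
    rw [← Submodule.Quotient.mk_eq_zero, ← Submodule.mkQ_apply, map_sub]
    have := congrArg (fun t => t (K.mkQ p)) hs
    simp only [LinearMap.comp_apply, LinearMap.id_apply] at this
    rw [this, sub_self]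
  let r : P →ₗ[ℤ] P := LinearMap.id - s ∘ₗ K.mkQ
  have hr_apply : ∀ p : P, r p = p - s (K.mkQ p) := fun p => rfl
  let rK : P →ₗ[ℤ] K := r.codRestrict K (fun p => hrmem p)
  -- inverse of j on its range
  let e : M ≃ₗ[ℤ] K := LinearEquiv.ofInjective jz hj
  -- the extended functional
  let ε : MonoidAlgebra ℤ G →+ ℤ := (Finsupp.applyAddHom (1 : G)).comp MonoidAlgebra.coeffAddEquiv.toAddMonoidHom
  let f0 : M →ₗ[ℤ] ℤ :=
    { toFun := fun m => ε (g₀ m)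
      map_add' := by intro a b; simp [map_add]
      map_smul' := fun c a => by
        show ε (g₀ (c • a)) = c • ε (g₀ a)
        rw [map_zsmul g₀, map_zsmul] }
  let f' : P →ₗ[ℤ] ℤ := f0 ∘ₗ (e.symm : K →ₗ[ℤ] M) ∘ₗ rK
  -- f' extends f0 along j
  have hext : ∀ m : M, f' (j m) = f0 m := by
    intro m
    have h1 : K.mkQ (jz m) = 0 := by
      rw [Submodule.mkQ_apply, Submodule.Quotient.mk_eq_zero]
      exact ⟨m, rfl⟩
    have h2 : rK (jz m) = e m := by
      apply Subtype.ext
      show r (jz m) = (e m : P)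
      rw [hr_apply, h1, map_zero, sub_zero]
      rfl
    show f0 (e.symm (rK (jz m))) = f0 m
    rw [h2, LinearEquiv.symm_apply_apply]
  refine ⟨PhiAux (f'.toAddMonoidHom), ?_⟩
  -- naturality + recovery
  have hnat : (PhiAux (f'.toAddMonoidHom)).comp j
      = PhiAux (ε.comp g₀.toAddMonoidHom) := by
    refine LinearMap.ext fun m => ?_
    show (∑ g : G, MonoidAlgebra.single g
        (f' ((MonoidAlgebra.single (g⁻¹ : G) (1:ℤ)) • (j m))))
      = ∑ g : G, MonoidAlgebra.single g (ε (g₀ ((MonoidAlgebra.single (g⁻¹ : G) (1:ℤ)) • m)))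
    apply Finset.sum_congr rfl
    intro g _
    congr 1
    rw [← map_smul j, hext]
    rfl
  show (PhiAux (f'.toAddMonoidHom)).comp j = g₀
  rw [hnat]
  exact PhiAux_eval_comp g₀
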